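/- arXiv:2212.13493 — 6 statements merged into one kernel-verified Lean document; each statement's English description precedes it below -/
import Mathlib

section
/- Let φ : [0,∞) → [0,∞) be an increasing bijection whose inverse φ⁻¹ is almost semi-multiplicative. Then the function η(t) = t / φ⁻¹(1/t) is an increasing bijection of (0,∞) onto itself, and for every constant a > 0 there exist c₁, c₂ > 0 such that c₁·η(t) ≤ η(a·t) ≤ c₂·η(t) for all t > 0. -/
/-- If `φ : [0,∞) → [0,∞)` is an increasing bijection with almost semi-multiplicative
inverse `ψ = φ⁻¹`, then `η(t) = t/ψ(1/t)` is an increasing bijection of `(0,∞)` onto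
itself and satisfies `c₁·η(t) ≤ η(a·t) ≤ c₂·η(t)`. -/
theorem stmt_5 (φ ψ : ℝ → ℝ)
    (hφ0 : φ 0 = 0)
    (hφmono : StrictMonoOn φ (Set.Ici 0))
    (hφmaps : ∀ t : ℝ, 0 ≤ t → 0 ≤ φ t)
    (hφsurj : ∀ y : ℝ, 0 ≤ y → ∃ t : ℝ, 0 ≤ t ∧ φ t = y)
    (hinv₁ : ∀ t : ℝ, 0 ≤ t → ψ (φ t) = t)
    (hinv₂ : ∀ t : ℝ, 0 ≤ t → φ (ψ t) = t)
    (hsm : ∃ c : ℝ, 0 < c ∧ ∀ t₁ t₂ : ℝ, 0 < t₁ → 0 < t₂ → ψ t₁ * ψ t₂ ≥ c * ψ (t₁ * t₂)) :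
    (StrictMonoOn (fun t : ℝ => t / ψ (1 / t)) (Set.Ioi 0)) ∧
    (∀ t : ℝ, 0 < t → 0 < t / ψ (1 / t)) ∧
    (∀ y : ℝ, 0 < y → ∃ t : ℝ, 0 < t ∧ t / ψ (1 / t) = y) ∧
    (∀ a : ℝ, 0 < a → ∃ c₁ c₂ : ℝ, 0 < c₁ ∧ 0 < c₂ ∧
      ∀ t : ℝ, 0 < t →
        c₁ * (t / ψ (1 / t)) ≤ a * t / ψ (1 / (a * t)) ∧
        a * t / ψ (1 / (a * t)) ≤ c₂ * (t / ψ (1 / t))) := by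
  -- basic facts about ψ
  have hψ0 : ψ 0 = 0 := by have := hinv₁ 0 le_rfl; rwa [hφ0] at this
  have hψnn : ∀ y : ℝ, 0 ≤ y → 0 ≤ ψ y := by
    intro y hy
    obtain ⟨t, ht, hφt⟩ := hφsurj y hy
    rw [← hφt, hinv₁ t ht]; exact ht
  have hψmono : StrictMonoOn ψ (Set.Ici 0) := by
    intro x hx y hy hxy
    by_contra h
    push_neg at h
    rcases eq_or_lt_of_le h with h' | h'
    · have := hinv₂ x hx
      rw [← h', hinv₂ y hy] at this
      exact absurd this (ne_of_gt hxy)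
    · have := hφmono (Set.mem_Ici.2 (hψnn y hy)) (Set.mem_Ici.2 (hψnn x hx)) h'
      rw [hinv₂ x hx, hinv₂ y hy] at this
      exact absurd this (not_lt.2 hxy.le)
  have hψpos : ∀ y : ℝ, 0 < y → 0 < ψ y := by
    intro y hy
    have := hψmono (Set.mem_Ici.2 le_rfl) (Set.mem_Ici.2 hy.le) hy
    rwa [hψ0] at this
  set η : ℝ → ℝ := fun t : ℝ => t / ψ (1 / t) with hη
  -- monotonicity of η
  have hmono : StrictMonoOn η (Set.Ioi 0) := by
    intro x hx y hy hxy
    simp only [Set.mem_Ioi] at hx hy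
    have h1x : (0:ℝ) < 1 / x := by positivity
    have h1y : (0:ℝ) < 1 / y := by positivity
    have h2 : ψ (1 / y) < ψ (1 / x) :=
      hψmono (Set.mem_Ici.2 h1y.le) (Set.mem_Ici.2 h1x.le)
        (one_div_lt_one_div_of_lt hx hxy)
    exact div_lt_div₀ hxy h2.le hy.le (hψpos _ h1y)
  -- positivity of η
  have hpos : ∀ t : ℝ, 0 < t → 0 < η t := by
    intro t ht
    have : (0:ℝ) < 1 / t := by positivity
    exact div_pos ht (hψpos _ this)
  -- continuity of ψ on positive reals
  have hψimg : ψ '' Set.Ioi 0 = Set.Ioi 0 := by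
    ext y
    constructor
    · rintro ⟨x, hx, rfl⟩
      exact hψpos x hx
    · intro hy
      have hy' : (0:ℝ) < y := hy
      have hφy : 0 < φ y := by
        have := hφmono (Set.mem_Ici.2 le_rfl) (Set.mem_Ici.2 hy'.le) hy'
        rwa [hφ0] at this
      exact ⟨φ y, hφy, hinv₁ y hy'.le⟩
  have hψcont : ∀ x : ℝ, 0 < x → ContinuousAt ψ x := by
    intro x hx
    apply (hψmono.mono (Set.Ioi_subset_Ici le_rfl)).continuousAt_of_image_mem_nhds
      (Ioi_mem_nhds hx)
    rw [hψimg]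
    exact Ioi_mem_nhds (hψpos x hx)
  have hηcont : ∀ x : ℝ, 0 < x → ContinuousAt η x := by
    intro x hx
    have h1x : (0:ℝ) < 1 / x := by positivity
    have hc1 : ContinuousAt (fun t : ℝ => 1 / t) x := by
      simp only [one_div]
      exact continuousAt_inv₀ (ne_of_gt hx)
    have hc2 : ContinuousAt (fun t : ℝ => ψ (1 / t)) x :=
      (hψcont (1 / x) h1x).comp hc1
    exact continuousAt_id.div hc2 (ne_of_gt (hψpos _ h1x))
  -- surjectivity of η
  have hsurj : ∀ y : ℝ, 0 < y → ∃ t : ℝ, 0 < t ∧ η t = y := by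
    intro y hy
    have hφ1 : 0 < φ 1 := by
      have := hφmono (Set.mem_Ici.2 le_rfl) (Set.mem_Ici.2 zero_le_one) one_pos
      rwa [hφ0] at this
    have hψ1 : 0 < ψ 1 := hψpos 1 one_pos
    set t₀ : ℝ := min y (1 / φ 1) with ht₀
    set t₁ : ℝ := max 1 (y * ψ 1) with ht₁
    have ht₀pos : 0 < t₀ := lt_min hy (by positivity)
    have ht₁pos : 0 < t₁ := lt_of_lt_of_le one_pos (le_max_left _ _)
    have hlo : η t₀ ≤ y := by
      have h1 : φ 1 ≤ 1 / t₀ := by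
        rw [le_div_iff₀ ht₀pos]
        calc φ 1 * t₀ ≤ φ 1 * (1 / φ 1) :=
              mul_le_mul_of_nonneg_left (min_le_right _ _) hφ1.le
          _ = 1 := by field_simp
      have h2 : (1:ℝ) ≤ ψ (1 / t₀) := by
        have := hψmono.monotoneOn (Set.mem_Ici.2 hφ1.le)
          (Set.mem_Ici.2 (le_trans hφ1.le h1)) h1
        rwa [hinv₁ 1 zero_le_one] at this
      calc η t₀ = t₀ / ψ (1 / t₀) := rfl
        _ ≤ t₀ := div_le_self ht₀pos.le h2
        _ ≤ y := min_le_left _ _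
    have hhi : y ≤ η t₁ := by
      have h1t₁ : (0:ℝ) < 1 / t₁ := by positivity
      have h1 : ψ (1 / t₁) ≤ ψ 1 := by
        apply hψmono.monotoneOn (Set.mem_Ici.2 h1t₁.le) (Set.mem_Ici.2 zero_le_one)
        rw [div_le_one ht₁pos]
        exact le_max_left _ _
      have h2 : 0 < ψ (1 / t₁) := hψpos _ h1t₁
      calc y = (y * ψ 1) / ψ 1 := by field_simp
        _ ≤ t₁ / ψ 1 := (div_le_div_iff_of_pos_right hψ1).2 (le_max_right _ _)
        _ ≤ t₁ / ψ (1 / t₁) := div_le_div_of_nonneg_left ht₁pos.le h2 h1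
        _ = η t₁ := rfl
    -- intermediate value theorem
    have hcont : ContinuousOn η (Set.uIcc t₀ t₁) := by
      intro x hx
      have hxpos : 0 < x := lt_of_lt_of_le (lt_min ht₀pos ht₁pos) hx.1
      exact (hηcont x hxpos).continuousWithinAt
    have := intermediate_value_uIcc hcont
    have hy' : y ∈ Set.uIcc (η t₀) (η t₁) :=
      Set.mem_uIcc.2 (Or.inl ⟨hlo, hhi⟩)
    obtain ⟨t, ht, hηt⟩ := this hy'
    exact ⟨t, lt_of_lt_of_le (lt_min ht₀pos ht₁pos) ht.1, hηt⟩
  refine ⟨hmono, hpos, hsurj, ?_⟩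
  -- the doubling-type estimates
  obtain ⟨c, hc, hsm'⟩ := hsm
  intro a ha
  have hψa : 0 < ψ a := hψpos a ha
  have hψia : 0 < ψ (1 / a) := hψpos _ (by positivity)
  refine ⟨a * c / ψ (1 / a), a * ψ a / c, by positivity, by positivity, ?_⟩
  intro t ht
  have hE : 0 < ψ (1 / t) := hψpos _ (by positivity)
  have hD : 0 < ψ (1 / (a * t)) := hψpos _ (by positivity)
  constructor
  · -- lower bound: from ψ(1/a)·ψ(1/t) ≥ c·ψ(1/(a t))
    have key := hsm' (1 / a) (1 / t) (by positivity) (by positivity)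
    rw [show (1 / a) * (1 / t) = 1 / (a * t) by field_simp] at key
    rw [div_mul_div_comm, div_le_div_iff₀ (by positivity) hD]
    nlinarith [mul_le_mul_of_nonneg_left key (by positivity : (0:ℝ) ≤ a * t)]
  · -- upper bound: from ψ(a)·ψ(1/(a t)) ≥ c·ψ(1/t)
    have key := hsm' a (1 / (a * t)) ha (by positivity)
    rw [show a * (1 / (a * t)) = 1 / t by field_simp] at key
    rw [div_mul_div_comm, div_le_div_iff₀ hD (by positivity)]
    nlinarith [mul_le_mul_of_nonneg_left key (by positivity : (0:ℝ) ≤ a * t)]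
end

section
/- Let φ : (0,∞) → (0,∞) be an increasing bijection whose inverse φ⁻¹ is almost semi-multiplicative, and define η(t) = t/φ⁻¹(1/t). Then there is a constant C > 0 such that for all real numbers a > 0 and b > 0, η(a)·b ≥ C·η(a / η⁻¹(1/b)). -/
/-- Lemma 3.5: there is `C > 0` such that `η(a)·b ≥ C·η(a/η⁻¹(1/b))` for all `a, b > 0`. -/
theorem stmt_8 (φ ψ η ηinv : ℝ → ℝ)
    (hφmono : StrictMonoOn φ (Set.Ioi 0))
    (hφmaps : ∀ t : ℝ, 0 < t → 0 < φ t)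
    (hφsurj : ∀ y : ℝ, 0 < y → ∃ t : ℝ, 0 < t ∧ φ t = y)
    (hinv₁ : ∀ t : ℝ, 0 < t → ψ (φ t) = t)
    (hinv₂ : ∀ t : ℝ, 0 < t → φ (ψ t) = t)
    (hψpos : ∀ t : ℝ, 0 < t → 0 < ψ t)
    (hsm : ∃ c : ℝ, 0 < c ∧ ∀ t₁ t₂ : ℝ, 0 < t₁ → 0 < t₂ → ψ t₁ * ψ t₂ ≥ c * ψ (t₁ * t₂))
    (hη : ∀ t : ℝ, 0 < t → η t = t / ψ (1 / t))
    (hηinv₁ : ∀ t : ℝ, 0 < t → ηinv (η t) = t)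
    (hηinv₂ : ∀ t : ℝ, 0 < t → η (ηinv t) = t)
    (hηinvpos : ∀ t : ℝ, 0 < t → 0 < ηinv t) :
    ∃ C : ℝ, 0 < C ∧ ∀ a b : ℝ, 0 < a → 0 < b →
      η a * b ≥ C * η (a / ηinv (1 / b)) := by
  obtain ⟨c, hc, hsmul⟩ := hsm
  refine ⟨c, hc, fun a b ha hb => ?_⟩
  set s := ηinv (1 / b) with hsdef
  have hs : 0 < s := hηinvpos _ (by positivity)
  have hψs : 0 < ψ (1 / s) := hψpos _ (by positivity)
  have hψa : 0 < ψ (1 / a) := hψpos _ (by positivity)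
  have hψsa : 0 < ψ (s / a) := hψpos _ (by positivity)
  have hηs : η s = 1 / b := hηinv₂ _ (by positivity)
  rw [hη s hs] at hηs
  have hb' : b = ψ (1 / s) / s := by
    field_simp at hηs
    rw [eq_div_iff hs.ne']
    linarith
  have key : ψ (1 / s) * ψ (s / a) ≥ c * ψ (1 / a) := by
    have h := hsmul (1 / s) (s / a) (by positivity) (by positivity)
    rw [show (1 / s) * (s / a) = 1 / a by field_simp] at h
    exact h
  rw [hη a ha, hη (a / s) (by positivity), one_div_div, hb']
  have e1 : a / ψ (1 / a) * (ψ (1 / s) / s) = a * ψ (1 / s) / (ψ (1 / a) * s) := by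
    ring
  have e2 : c * (a / s / ψ (s / a)) = c * a / (s * ψ (s / a)) := by ring
  rw [ge_iff_le, e1, e2, div_le_div_iff₀ (by positivity) (by positivity)]
  nlinarith [mul_le_mul_of_nonneg_left key (le_of_lt (mul_pos ha hs))]
end

section
/- Let φ : [0,∞) → [0,∞) be an increasing bijection, n ≥ 2, r₁ < r₂ positive reals, and 𝓕 ≥ 0. Then the function w(r) = ∫_{r₁}^{r} φ⁻¹((τⁿ − r₁ⁿ)·𝓕/(n·τ^{n−1})) dτ satisfies the radial ODE (1/r^{n−1})·d/dr(r^{n−1}·φ(w'(r))) = 𝓕 on (r₁, r₂) with initial conditions w(r₁) = 0 and w'(r₁) = 0. -/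
/-- The function `w(r) = ∫_{r₁}^{r} φ⁻¹((τⁿ − r₁ⁿ)𝓕/(nτ^{n−1})) dτ` solves the
radial Cauchy problem `(1/r^{n−1})(r^{n−1}φ(w'))' = 𝓕`, `w(r₁) = w'(r₁) = 0`. -/
theorem stmt_12 (n : ℕ) (hn : 2 ≤ n) (φ ψ : ℝ → ℝ)
    (hφd : ContDiff ℝ 1 φ)
    (hφ0 : φ 0 = 0)
    (hφmono : StrictMonoOn φ (Set.Ici 0))
    (hφmaps : ∀ t : ℝ, 0 ≤ t → 0 ≤ φ t)
    (hφsurj : ∀ y : ℝ, 0 ≤ y → ∃ t : ℝ, 0 ≤ t ∧ φ t = y)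
    (hinv₁ : ∀ t : ℝ, 0 ≤ t → ψ (φ t) = t)
    (hinv₂ : ∀ t : ℝ, 0 ≤ t → φ (ψ t) = t)
    (F r₁ r₂ : ℝ) (hF : 0 ≤ F) (hr₁ : 0 < r₁) (hr₁₂ : r₁ < r₂)
    (w : ℝ → ℝ)
    (hw : ∀ r : ℝ, w r = ∫ τ in r₁..r, ψ ((τ ^ n - r₁ ^ n) * F / (n * τ ^ (n - 1)))) :
    w r₁ = 0 ∧
    ψ ((r₁ ^ n - r₁ ^ n) * F / (n * r₁ ^ (n - 1))) = 0 ∧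
    ∀ r ∈ Set.Ioo r₁ r₂,
      HasDerivAt w (ψ ((r ^ n - r₁ ^ n) * F / (n * r ^ (n - 1)))) r ∧
      HasDerivAt (fun s : ℝ => s ^ (n - 1) * φ (ψ ((s ^ n - r₁ ^ n) * F / (n * s ^ (n - 1)))))
        (F * r ^ (n - 1)) r := by
  have hψ0 : ψ 0 = 0 := by simpa [hφ0] using hinv₁ 0 le_rfl
  have hn0 : (n : ℝ) ≠ 0 := by positivity
  -- continuity of ψ on [0,∞)
  have hψcont : ContinuousOn ψ (Set.Ici (0:ℝ)) := by
    set f : Set.Ici (0:ℝ) → Set.Ici (0:ℝ) := fun t => ⟨φ t, hφmaps t t.2⟩ with hf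
    have hfs : StrictMono f := fun a b hab => by
      exact hφmono a.2 b.2 hab
    have hsurj : Function.Surjective f := fun y => by
      obtain ⟨t, ht, hft⟩ := hφsurj y y.2
      exact ⟨⟨t, ht⟩, Subtype.ext hft⟩
    set e := StrictMono.orderIsoOfSurjective f hfs hsurj with he
    have hkey : ∀ x : Set.Ici (0:ℝ), ψ x = (e.symm x : ℝ) := by
      intro x
      have h1 : φ (e.symm x : ℝ) = x := congrArg Subtype.val (e.apply_symm_apply x)
      calc ψ x = ψ (φ (e.symm x : ℝ)) := by rw [h1]
        _ = (e.symm x : ℝ) := hinv₁ _ (e.symm x).2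
    have hc : Continuous fun x : Set.Ici (0:ℝ) => (e.symm x : ℝ) :=
      continuous_subtype_val.comp (OrderIso.continuous e.symm)
    rw [continuousOn_iff_continuous_restrict]
    convert hc using 1
    funext x
    exact hkey x
  set h : ℝ → ℝ := fun τ => (τ ^ n - r₁ ^ n) * F / (n * τ ^ (n - 1)) with hh
  have hhcont : ContinuousOn h (Set.Ioi (0:ℝ)) := by
    apply ContinuousOn.div
    · fun_prop
    · fun_prop
    · intro x hx
      have : (0:ℝ) < x := hx
      positivity
  have hhnn : ∀ τ : ℝ, r₁ ≤ τ → 0 ≤ h τ := by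
    intro τ hτ
    have h0τ : (0:ℝ) < τ := lt_of_lt_of_le hr₁ hτ
    have : r₁ ^ n ≤ τ ^ n := pow_le_pow_left₀ hr₁.le hτ n
    have hden : (0:ℝ) < n * τ ^ (n - 1) := by positivity
    exact div_nonneg (mul_nonneg (by linarith) hF) hden.le
  have hw0 : w r₁ = 0 := by rw [hw, intervalIntegral.integral_same]
  have h2 : ψ ((r₁ ^ n - r₁ ^ n) * F / (n * r₁ ^ (n - 1))) = 0 := by
    simpa using hψ0
  refine ⟨hw0, h2, ?_⟩
  intro r hr
  have hrr₁ : r₁ < r := hr.1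
  have hr0 : (0:ℝ) < r := lt_trans hr₁ hrr₁
  -- g continuous on [r₁, r]
  have hgcont : ContinuousOn (fun τ => ψ (h τ)) (Set.Icc r₁ r) := by
    apply hψcont.comp (hhcont.mono ?_)
    · intro τ hτ
      exact hhnn τ hτ.1
    · intro τ hτ
      exact lt_of_lt_of_le hr₁ hτ.1
  have hint : IntervalIntegrable (fun τ => ψ (h τ)) MeasureTheory.volume r₁ r := by
    apply ContinuousOn.intervalIntegrable
    rwa [Set.uIcc_of_le hrr₁.le]
  -- g continuous on Ioi r₁ (for measurability filter)
  have hgcont' : ContinuousOn (fun τ => ψ (h τ)) (Set.Ioi r₁) := by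
    apply hψcont.comp (hhcont.mono ?_)
    · intro τ hτ
      exact hhnn τ (le_of_lt hτ)
    · intro τ hτ
      exact lt_trans hr₁ hτ
  have hmeas : StronglyMeasurableAtFilter (fun τ => ψ (h τ)) (nhds r) MeasureTheory.volume :=
    ContinuousOn.stronglyMeasurableAtFilter isOpen_Ioi hgcont' r hrr₁
  have hat : ContinuousAt (fun τ => ψ (h τ)) r := by
    have hhat : ContinuousAt h r := (hhcont r hr0).continuousAt (Ioi_mem_nhds hr0)
    have hev : ∀ᶠ s in nhds r, h s ∈ Set.Ici (0:ℝ) := by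
      filter_upwards [Ioi_mem_nhds hrr₁] with s hs
      exact hhnn s (le_of_lt hs)
    exact ((hψcont (h r) (hhnn r hrr₁.le)).tendsto).comp
      (tendsto_nhdsWithin_iff.2 ⟨hhat, hev⟩)
  have hwderiv : HasDerivAt w (ψ (h r)) r := by
    have : HasDerivAt (fun u => ∫ τ in r₁..u, ψ (h τ)) (ψ (h r)) r :=
      intervalIntegral.integral_hasDerivAt_right hint hmeas hat
    have hwe : w = fun u => ∫ τ in r₁..u, ψ (h τ) := funext hw
    rw [hwe]
    exact this
  refine ⟨hwderiv, ?_⟩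
  -- second derivative statement
  have heq : (fun s : ℝ => s ^ (n - 1) * φ (ψ ((s ^ n - r₁ ^ n) * F / (n * s ^ (n - 1)))))
      =ᶠ[nhds r] fun s : ℝ => (s ^ n - r₁ ^ n) * F / n := by
    filter_upwards [Ioi_mem_nhds hrr₁] with s hs
    have hs0 : (0:ℝ) < s := lt_trans hr₁ hs
    have hs1 : s ^ (n - 1) ≠ 0 := by positivity
    rw [hinv₂ _ (hhnn s (le_of_lt hs)), mul_div_assoc', mul_comm (s ^ (n-1)),
      mul_div_assoc, mul_comm ((n:ℝ)), div_mul_cancel_left₀ hs1, div_eq_mul_inv]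
  have hd : HasDerivAt (fun s : ℝ => (s ^ n - r₁ ^ n) * F / n) (F * r ^ (n - 1)) r := by
    have h1 : HasDerivAt (fun s : ℝ => (s ^ n - r₁ ^ n) * F / n)
        ((n : ℝ) * r ^ (n - 1) * F / n) r := by
      exact (((hasDerivAt_pow n r).sub_const (r₁ ^ n)).mul_const F).div_const (n : ℝ)
    convert h1 using 1
    field_simp
  exact hd.congr_of_eventuallyEq heq
end

section
/- Let φ : (0,∞) → (0,∞) be an increasing bijection whose inverse φ⁻¹ is almost semi-multiplicative, let n ≥ 2, σ > 1, and 0 < r₁ < r₂ ≤ σr₁, and let 𝓕 > 0. Then there is a constant C > 0 depending only on σ, n, φ such that ∫_{r₁}^{r₂} φ⁻¹((τⁿ − r₁ⁿ)𝓕/(nτ^{n−1})) dτ ≥ C·(r₂ − r₁)·φ⁻¹((r₂ − r₁)·𝓕). -/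
/-- Estimate (pl3.3.2): `∫_{r₁}^{r₂} φ⁻¹((τⁿ−r₁ⁿ)𝓕/(nτ^{n−1})) dτ ≥
C·(r₂−r₁)·φ⁻¹((r₂−r₁)𝓕)` with `C` depending only on `σ`, `n`, `φ`. -/
theorem stmt_14 (n : ℕ) (hn : 2 ≤ n) (σ : ℝ) (hσ : 1 < σ) (φ ψ : ℝ → ℝ)
    (hφmono : StrictMonoOn φ (Set.Ioi 0))
    (hφmaps : ∀ t : ℝ, 0 < t → 0 < φ t)
    (hφsurj : ∀ y : ℝ, 0 < y → ∃ t : ℝ, 0 < t ∧ φ t = y)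
    (hinv₁ : ∀ t : ℝ, 0 < t → ψ (φ t) = t)
    (hinv₂ : ∀ t : ℝ, 0 < t → φ (ψ t) = t)
    (hψpos : ∀ t : ℝ, 0 < t → 0 < ψ t)
    (hsm : ∃ c : ℝ, 0 < c ∧ ∀ t₁ t₂ : ℝ, 0 < t₁ → 0 < t₂ → ψ t₁ * ψ t₂ ≥ c * ψ (t₁ * t₂)) :
    ∃ C : ℝ, 0 < C ∧ ∀ F r₁ r₂ : ℝ, 0 < F → 0 < r₁ → r₁ < r₂ → r₂ ≤ σ * r₁ →
      (∫ τ in r₁..r₂, ψ ((τ ^ n - r₁ ^ n) * F / (n * τ ^ (n - 1)))) ≥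
        C * (r₂ - r₁) * ψ ((r₂ - r₁) * F) := by
  obtain ⟨c, hc, hsmul⟩ := hsm
  obtain ⟨k, hk⟩ : ∃ k, n = k + 1 := ⟨n - 1, by omega⟩
  have hnk : n - 1 = k := by omega
  have hnpos : (0:ℝ) < (n:ℝ) := by exact_mod_cast Nat.pos_of_ne_zero (by omega)
  have h2n : (0:ℝ) < 2 * (n:ℝ) := by linarith
  -- ψ is monotone on positives
  have hψmono : ∀ s t : ℝ, 0 < s → s ≤ t → ψ s ≤ ψ t := by
    intro s t hs hst
    have ht : 0 < t := lt_of_lt_of_le hs hst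
    by_contra hlt
    push_neg at hlt
    have := hφmono (Set.mem_Ioi.2 (hψpos t ht)) (Set.mem_Ioi.2 (hψpos s hs)) hlt
    rw [hinv₂ t ht, hinv₂ s hs] at this
    exact absurd hst (not_le.2 this)
  have hψ2n : 0 < ψ (2 * (n:ℝ)) := hψpos _ h2n
  refine ⟨c / (2 * ψ (2 * (n:ℝ))), by positivity, ?_⟩
  intro F r₁ r₂ hF hr₁ hr₁₂ _
  set m : ℝ := (r₁ + r₂) / 2 with hm
  have hm1 : r₁ < m := by rw [hm]; linarith
  have hm2 : m < r₂ := by rw [hm]; linarith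
  set g : ℝ → ℝ := fun τ => (τ ^ n - r₁ ^ n) * F / ((n:ℝ) * τ ^ (n - 1)) with hg
  have hgpos : ∀ τ : ℝ, r₁ < τ → 0 < g τ := by
    intro τ hτ
    have hτ0 : 0 < τ := hr₁.trans hτ
    have hnum : 0 < τ ^ n - r₁ ^ n := by
      have := pow_lt_pow_left₀ hτ hr₁.le (by omega : n ≠ 0)
      linarith
    have : (0:ℝ) < (n:ℝ) * τ ^ (n - 1) := by positivity
    exact div_pos (mul_pos hnum hF) this
  have hgmono : ∀ x y : ℝ, r₁ < x → x ≤ y → g x ≤ g y := by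
    intro x y hx hxy
    have hx0 : 0 < x := hr₁.trans hx
    have hy0 : 0 < y := hx0.trans_le hxy
    have hxk : x ^ k ≤ y ^ k := pow_le_pow_left₀ hx0.le hxy k
    have hrk : r₁ ^ k ≤ x ^ k := pow_le_pow_left₀ hr₁.le hx.le k
    have key : (x ^ (k+1) - r₁ ^ (k+1)) * y ^ k ≤ (y ^ (k+1) - r₁ ^ (k+1)) * x ^ k := by
      rw [pow_succ, pow_succ, pow_succ]
      nlinarith [mul_nonneg (sub_nonneg.2 hxy)
          (mul_nonneg (pow_nonneg hx0.le k) (pow_nonneg hy0.le k)),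
        mul_nonneg (mul_nonneg (pow_nonneg hr₁.le k) hr₁.le) (sub_nonneg.2 hxk)]
    have hFn : (0:ℝ) ≤ F * ((k:ℝ) + 1) := by positivity
    have key2 := mul_le_mul_of_nonneg_left key hFn
    simp only [hg, hk, Nat.add_sub_cancel]
    rw [div_le_div_iff₀ (by positivity) (by positivity)]
    push_cast
    nlinarith [key2]
  -- lower bound at the midpoint
  have hglb : (r₂ - r₁) * F / (2 * (n:ℝ)) ≤ g m := by
    have hm0 : 0 < m := hr₁.trans hm1
    have hrk : r₁ ^ k ≤ m ^ k := pow_le_pow_left₀ hr₁.le hm1.le k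
    have key : (m - r₁) * m ^ k ≤ m ^ (k+1) - r₁ ^ (k+1) := by
      rw [pow_succ, pow_succ]
      nlinarith [mul_le_mul_of_nonneg_right hrk hr₁.le]
    simp only [hg, hk, Nat.add_sub_cancel]
    rw [div_le_div_iff₀ (by positivity) (by positivity)]
    have key2 := mul_le_mul_of_nonneg_left key
      (by positivity : (0:ℝ) ≤ F * (2 * ((k:ℝ) + 1)))
    have hmr : m - r₁ = (r₂ - r₁) / 2 := by rw [hm]; ring
    rw [hmr] at key2
    push_cast
    nlinarith [key2]
  set s : ℝ := (r₂ - r₁) * F with hsdef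
  have hs : 0 < s := by
    have : 0 < r₂ - r₁ := by linarith
    positivity
  have hs2n : 0 < s / (2 * (n:ℝ)) := by positivity
  have hK : ψ (s / (2 * (n:ℝ))) ≤ ψ (g m) := hψmono _ _ hs2n hglb
  have hc2 : c * ψ s ≤ ψ (s / (2 * (n:ℝ))) * ψ (2 * (n:ℝ)) := by
    have := hsmul (s / (2 * (n:ℝ))) (2 * (n:ℝ)) hs2n h2n
    rwa [div_mul_cancel₀ s (ne_of_gt h2n)] at this
  have h1 : c * ψ s / ψ (2 * (n:ℝ)) ≤ ψ (g m) := by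
    rw [div_le_iff₀ hψ2n]
    have := mul_le_mul_of_nonneg_right hK hψ2n.le
    linarith
  -- the modified integrand
  set f' : ℝ → ℝ := fun τ => if r₁ < τ then ψ (g τ) else 0 with hf'
  have heq : (∫ τ in r₁..r₂, ψ ((τ ^ n - r₁ ^ n) * F / ((n:ℝ) * τ ^ (n - 1))))
      = ∫ τ in r₁..r₂, f' τ := by
    apply intervalIntegral.integral_congr_ae
    filter_upwards with x hx
    rw [Set.uIoc_of_le hr₁₂.le] at hx
    simp only [hf', hg, if_pos hx.1]
  have hmono' : MonotoneOn f' (Set.Icc r₁ r₂) := by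
    intro x hx y hy hxy
    by_cases h1 : r₁ < x
    · have h2 : r₁ < y := h1.trans_le hxy
      simp only [hf', if_pos h1, if_pos h2]
      exact hψmono _ _ (hgpos x h1) (hgmono x y h1 hxy)
    · simp only [hf', if_neg h1]
      by_cases h2 : r₁ < y
      · simp only [if_pos h2]
        exact (hψpos _ (hgpos y h2)).le
      · simp only [if_neg h2]; exact le_rfl
  have hint : IntervalIntegrable f' MeasureTheory.volume r₁ r₂ := by
    apply MonotoneOn.intervalIntegrable
    rwa [Set.uIcc_of_le hr₁₂.le]
  have hi1 : IntervalIntegrable f' MeasureTheory.volume r₁ m :=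
    hint.mono_set (by
      rw [Set.uIcc_of_le hm1.le, Set.uIcc_of_le hr₁₂.le]
      exact Set.Icc_subset_Icc le_rfl hm2.le)
  have hi2 : IntervalIntegrable f' MeasureTheory.volume m r₂ :=
    hint.mono_set (by
      rw [Set.uIcc_of_le hm2.le, Set.uIcc_of_le hr₁₂.le]
      exact Set.Icc_subset_Icc hm1.le le_rfl)
  have hsplit : (∫ τ in r₁..r₂, f' τ) = (∫ τ in r₁..m, f' τ) + ∫ τ in m..r₂, f' τ :=
    (intervalIntegral.integral_add_adjacent_intervals hi1 hi2).symm
  have hlow1 : 0 ≤ ∫ τ in r₁..m, f' τ := by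
    apply intervalIntegral.integral_nonneg hm1.le
    intro u hu
    simp only [hf']
    split
    · exact (hψpos _ (hgpos u (by assumption))).le
    · exact le_rfl
  have hlow2 : (r₂ - m) * ψ (g m) ≤ ∫ τ in m..r₂, f' τ := by
    have hmono2 := intervalIntegral.integral_mono_on hm2.le
      (intervalIntegrable_const (c := ψ (g m))) hi2
      (fun x hx => by
        simp only [hf', if_pos (hm1.trans_le hx.1)]
        exact hψmono _ _ (hgpos m hm1) (hgmono m x hm1 hx.1))
    simpa [smul_eq_mul] using hmono2
  have hmain : c / (2 * ψ (2 * (n:ℝ))) * (r₂ - r₁) * ψ s ≤ (r₂ - m) * ψ (g m) := by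
    have hrm : r₂ - m = (r₂ - r₁) / 2 := by rw [hm]; ring
    have h2 := mul_le_mul_of_nonneg_left h1 (by linarith : (0:ℝ) ≤ (r₂ - r₁) / 2)
    calc c / (2 * ψ (2 * (n:ℝ))) * (r₂ - r₁) * ψ s
        = (r₂ - r₁) / 2 * (c * ψ s / ψ (2 * (n:ℝ))) := by field_simp
      _ ≤ (r₂ - r₁) / 2 * ψ (g m) := h2
      _ = (r₂ - m) * ψ (g m) := by rw [hrm]
  rw [ge_iff_le, heq, hsplit]
  linarith
end

section
/- Let g : (0,∞) → (0,∞) be almost semi-multiplicative and bounded above on every compact subset of (0,∞). Fix constants 0 < α < β. Then there exists a constant C > 0 such that whenever τ, t > 0 with τ/t ∈ [α, β], one has g(t) ≥ C·g(τ). -/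
/-- If `g` is almost semi-multiplicative and bounded above on compact subsets of `(0,∞)`,
then `g(t) ≥ C·g(τ)` whenever `τ/t ∈ [α, β]`. -/
theorem stmt_15 (g : ℝ → ℝ) (hg : ∀ t : ℝ, 0 < t → 0 < g t)
    (hsm : ∃ c : ℝ, 0 < c ∧ ∀ t₁ t₂ : ℝ, 0 < t₁ → 0 < t₂ → g t₁ * g t₂ ≥ c * g (t₁ * t₂))
    (hbd : ∀ K : Set ℝ, K ⊆ Set.Ioi 0 → IsCompact K → ∃ M : ℝ, ∀ x ∈ K, g x ≤ M)
    (α β : ℝ) (hα : 0 < α) (hαβ : α < β) :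
    ∃ C : ℝ, 0 < C ∧ ∀ τ t : ℝ, 0 < τ → 0 < t → α ≤ τ / t → τ / t ≤ β →
      g t ≥ C * g τ := by
  obtain ⟨c, hc, hsm⟩ := hsm
  obtain ⟨M, hM⟩ := hbd (Set.Icc α β)
    (fun x hx => lt_of_lt_of_le hα hx.1) isCompact_Icc
  have hMpos : 0 < M := lt_of_lt_of_le (hg α hα) (hM α ⟨le_refl _, hαβ.le⟩)
  refine ⟨c / M, div_pos hc hMpos, fun τ t hτ ht h1 h2 => ?_⟩
  have hq : 0 < τ / t := div_pos hτ ht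
  have key := hsm t (τ / t) ht hq
  rw [mul_div_cancel₀ τ (ne_of_gt ht)] at key
  have hgq : g (τ / t) ≤ M := hM _ ⟨h1, h2⟩
  have hgqpos : 0 < g (τ / t) := hg _ hq
  have : g t ≥ c * g τ / g (τ / t) := by
    rw [ge_iff_le, div_le_iff₀ hgqpos]
    linarith [key]
  calc g t ≥ c * g τ / g (τ / t) := this
    _ ≥ c * g τ / M := by
        exact div_le_div_of_nonneg_left (mul_nonneg hc.le (hg τ hτ).le) hgqpos hgq
    _ = c / M * g τ := by ring
end

section
/- Let p > 1 and ν ∈ ℝ, and suppose φ : (0,∞) → (0,∞) is an increasing bijection with φ(t) ~ t^{p−1}·(log t)^ν as t → ∞ (i.e., the ratio is bounded between two positive constants in a neighborhood of ∞). Then its inverse satisfies φ⁻¹(t) ~ t^{1/(p−1)}·(log t)^{−ν/(p−1)} as t → ∞. -/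
/-- Two functions are comparable at infinity: the ratio lies between two positive
constants in a neighborhood of infinity. -/
def AsympInfty (f h : ℝ → ℝ) : Prop :=
  ∃ c₁ c₂ T : ℝ, 0 < c₁ ∧ c₁ ≤ c₂ ∧ 0 < T ∧
    ∀ t : ℝ, T < t → c₁ * h t ≤ f t ∧ f t ≤ c₂ * h t

open Filter Real Topology

private lemma aux_logdiv : Tendsto (fun u : ℝ => Real.log u / u) atTop (𝓝 0) :=
  Real.isLittleO_log_id_atTop.tendsto_div_nhds_zero

/-- `t ^ r * (log t) ^ s → ∞` when `r > 0`. -/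
private lemma aux_g_atTop (r s : ℝ) (hr : 0 < r) :
    Tendsto (fun t : ℝ => t ^ r * Real.log t ^ s) atTop atTop := by
  have h1 : Tendsto (fun u : ℝ => r + s * (Real.log u / u)) atTop (𝓝 r) := by
    have h2 : Tendsto (fun u : ℝ => s * (Real.log u / u)) atTop (𝓝 (s * 0)) :=
      tendsto_const_nhds.mul aux_logdiv
    simpa using tendsto_const_nhds.add h2
  have h2 : Tendsto (fun u : ℝ => u * (r + s * (Real.log u / u))) atTop atTop :=
    Filter.Tendsto.atTop_mul_pos hr tendsto_id h1
  have h3 : Tendsto (fun u : ℝ => r * u + s * Real.log u) atTop atTop := by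
    refine h2.congr' ?_
    filter_upwards [eventually_gt_atTop (0 : ℝ)] with u hu
    field_simp
  have h4 : Tendsto (fun t : ℝ => r * Real.log t + s * Real.log (Real.log t))
      atTop atTop := h3.comp Real.tendsto_log_atTop
  have h5 := Real.tendsto_exp_atTop.comp h4
  refine h5.congr' ?_
  filter_upwards [eventually_gt_atTop (1 : ℝ)] with t ht
  have ht0 : (0 : ℝ) < t := lt_trans one_pos ht
  have hL : 0 < Real.log t := Real.log_pos ht
  simp only [Function.comp]
  rw [Real.exp_add, Real.rpow_def_of_pos ht0, Real.rpow_def_of_pos hL,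
    mul_comm (Real.log t) r, mul_comm (Real.log (Real.log t)) s]

/-- The normalized log of `a * (t ^ r * (log t) ^ s)` tends to `r`. -/
private lemma aux_w_tendsto (r s a : ℝ) (ha : 0 < a) :
    Tendsto (fun t : ℝ =>
      Real.log (a * (t ^ r * Real.log t ^ s)) / Real.log t) atTop (𝓝 r) := by
  have h0 : Tendsto (fun t : ℝ => Real.log a * (Real.log t)⁻¹) atTop (𝓝 (Real.log a * 0)) :=
    tendsto_const_nhds.mul Real.tendsto_log_atTop.inv_tendsto_atTop
  have h1 : Tendsto (fun t : ℝ => s * (Real.log (Real.log t) / Real.log t))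
      atTop (𝓝 (s * 0)) :=
    tendsto_const_nhds.mul (aux_logdiv.comp Real.tendsto_log_atTop)
  have h2 : Tendsto (fun t : ℝ =>
      Real.log a * (Real.log t)⁻¹ + (r + s * (Real.log (Real.log t) / Real.log t)))
      atTop (𝓝 r) := by
    simpa using h0.add (tendsto_const_nhds.add h1)
  refine h2.congr' ?_
  filter_upwards [eventually_gt_atTop (1 : ℝ)] with t ht
  have ht0 : (0 : ℝ) < t := lt_trans one_pos ht
  have hL : 0 < Real.log t := Real.log_pos ht
  have htr : (0 : ℝ) < t ^ r := Real.rpow_pos_of_pos ht0 r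
  have hLs : (0 : ℝ) < Real.log t ^ s := Real.rpow_pos_of_pos hL s
  rw [Real.log_mul (ne_of_gt ha) (ne_of_gt (mul_pos htr hLs)),
    Real.log_mul (ne_of_gt htr) (ne_of_gt hLs), Real.log_rpow ht0, Real.log_rpow hL]
  field_simp

/-- If `φ(t) ~ t^{p−1}(log t)^ν` as `t → ∞`, then
`φ⁻¹(t) ~ t^{1/(p−1)}(log t)^{−ν/(p−1)}` as `t → ∞`. -/
theorem stmt_17 (p ν : ℝ) (hp : 1 < p) (φ ψ : ℝ → ℝ)
    (hφmono : StrictMonoOn φ (Set.Ioi 0))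
    (hφmaps : ∀ t : ℝ, 0 < t → 0 < φ t)
    (hφsurj : ∀ y : ℝ, 0 < y → ∃ t : ℝ, 0 < t ∧ φ t = y)
    (hinv₁ : ∀ t : ℝ, 0 < t → ψ (φ t) = t)
    (hinv₂ : ∀ t : ℝ, 0 < t → φ (ψ t) = t)
    (hψpos : ∀ t : ℝ, 0 < t → 0 < ψ t)
    (hasymp : AsympInfty φ (fun t => t ^ (p - 1) * Real.log t ^ ν)) :
    AsympInfty ψ (fun t => t ^ (1 / (p - 1)) * Real.log t ^ (-ν / (p - 1))) := by
  obtain ⟨c₁, c₂, T, hc₁, hc₁₂, hT, hbound⟩ := hasymp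
  have hc₂ : 0 < c₂ := lt_of_lt_of_le hc₁ hc₁₂
  set q : ℝ := p - 1 with hqdef
  have hq : 0 < q := by simp only [hqdef]; linarith
  set r : ℝ := 1 / q with hrdef
  set s : ℝ := -ν / q with hsdef
  have hr : 0 < r := by positivity
  set g : ℝ → ℝ := fun t => t ^ r * Real.log t ^ s with hgdef
  have hrq : r * q = 1 := one_div_mul_cancel hq.ne'
  have hsq : s * q = -ν := div_mul_cancel₀ _ hq.ne'
  have hK : (0 : ℝ) < r ^ ν := Real.rpow_pos_of_pos hr ν
  -- positivity of g
  have hgpos : ∀ t : ℝ, 1 < t → 0 < g t := by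
    intro t ht
    have ht0 : (0 : ℝ) < t := lt_trans one_pos ht
    have hL : 0 < Real.log t := Real.log_pos ht
    exact mul_pos (Real.rpow_pos_of_pos ht0 r) (Real.rpow_pos_of_pos hL s)
  -- the key algebraic identity
  have key : ∀ a t : ℝ, 0 < a → 1 < t →
      0 ≤ Real.log (a * g t) / Real.log t →
      (a * g t) ^ q * Real.log (a * g t) ^ ν
        = a ^ q * (Real.log (a * g t) / Real.log t) ^ ν * t := by
    intro a t ha ht hw
    have ht0 : (0 : ℝ) < t := lt_trans one_pos ht
    have hL : 0 < Real.log t := Real.log_pos ht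
    have hg0 : 0 < g t := hgpos t ht
    set w : ℝ := Real.log (a * g t) / Real.log t with hwdef
    have hlogx : Real.log (a * g t) = w * Real.log t := by
      rw [hwdef, div_mul_cancel₀ _ (ne_of_gt hL)]
    have htr : (0 : ℝ) < t ^ r := Real.rpow_pos_of_pos ht0 r
    have hLs : (0 : ℝ) < Real.log t ^ s := Real.rpow_pos_of_pos hL s
    have e1 : (a * g t) ^ q = a ^ q * (t * Real.log t ^ (-ν)) := by
      rw [Real.mul_rpow ha.le hg0.le]
      congr 1
      show (t ^ r * Real.log t ^ s) ^ q = t * Real.log t ^ (-ν)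
      rw [Real.mul_rpow htr.le hLs.le, ← Real.rpow_mul ht0.le, ← Real.rpow_mul hL.le,
        hrq, hsq, Real.rpow_one]
    have e2 : Real.log (a * g t) ^ ν = w ^ ν * Real.log t ^ ν := by
      rw [hlogx, Real.mul_rpow hw hL.le]
    rw [e1, e2]
    have e3 : Real.log t ^ (-ν) * Real.log t ^ ν = 1 := by
      rw [← Real.rpow_add hL]
      simp
    calc a ^ q * (t * Real.log t ^ (-ν)) * (w ^ ν * Real.log t ^ ν)
        = a ^ q * w ^ ν * t * (Real.log t ^ (-ν) * Real.log t ^ ν) := by ring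
      _ = a ^ q * w ^ ν * t := by rw [e3, mul_one]
  have hgtop : Tendsto g atTop atTop := aux_g_atTop r s hr
  -- one-sided bound machine
  -- upper side: find a with c₂ * a^q * r^ν = 1/2
  set a : ℝ := (1 / (2 * c₂ * r ^ ν)) ^ r with hadef
  have hX : (0 : ℝ) < 1 / (2 * c₂ * r ^ ν) := by positivity
  have ha : 0 < a := Real.rpow_pos_of_pos hX r
  have haq : a ^ q = 1 / (2 * c₂ * r ^ ν) := by
    rw [hadef, ← Real.rpow_mul hX.le, hrq, Real.rpow_one]
  have ha_const : c₂ * a ^ q * r ^ ν = 1 / 2 := by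
    rw [haq]
    have h2 : (2 * c₂ * r ^ ν) ≠ 0 := by positivity
    field_simp
  -- lower side: find b with c₁ * b^q * r^ν = 2
  set b : ℝ := (2 / (c₁ * r ^ ν)) ^ r with hbdef
  have hY : (0 : ℝ) < 2 / (c₁ * r ^ ν) := by positivity
  have hb : 0 < b := Real.rpow_pos_of_pos hY r
  have hbq : b ^ q = 2 / (c₁ * r ^ ν) := by
    rw [hbdef, ← Real.rpow_mul hY.le, hrq, Real.rpow_one]
  have hb_const : c₁ * b ^ q * r ^ ν = 2 := by
    rw [hbq]
    have h2 : (c₁ * r ^ ν) ≠ 0 := by positivity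
    field_simp
  -- tendsto of normalized logs
  have hwa := aux_w_tendsto r s a ha
  have hwb := aux_w_tendsto r s b hb
  have hwa' : Tendsto (fun t => c₂ * a ^ q * (Real.log (a * g t) / Real.log t) ^ ν)
      atTop (𝓝 (1 / 2)) := by
    have h1 : Tendsto (fun t => (Real.log (a * g t) / Real.log t) ^ ν) atTop (𝓝 (r ^ ν)) :=
      hwa.rpow_const (Or.inl (ne_of_gt hr))
    have h2 := h1.const_mul (c₂ * a ^ q)
    rw [ha_const] at h2
    exact h2
  have hwb' : Tendsto (fun t => c₁ * b ^ q * (Real.log (b * g t) / Real.log t) ^ ν)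
      atTop (𝓝 (2 : ℝ)) := by
    have h1 : Tendsto (fun t => (Real.log (b * g t) / Real.log t) ^ ν) atTop (𝓝 (r ^ ν)) :=
      hwb.rpow_const (Or.inl (ne_of_gt hr))
    have h2 := h1.const_mul (c₁ * b ^ q)
    rw [hb_const] at h2
    exact h2
  -- the main eventual statement
  have main : ∀ᶠ t : ℝ in atTop, a * g t ≤ ψ t ∧ ψ t ≤ b * g t ∧ 0 ≤ g t := by
    filter_upwards [eventually_gt_atTop (1 : ℝ),
      hgtop.eventually_gt_atTop (T / a),
      hgtop.eventually_gt_atTop (T / b),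
      hwa.eventually_const_lt (by linarith : (0:ℝ) < r),
      hwb.eventually_const_lt (by linarith : (0:ℝ) < r),
      hwa'.eventually_lt_const (by norm_num : (1:ℝ)/2 < 1),
      hwb'.eventually_const_lt (by norm_num : (1:ℝ) < 2)] with t ht hga hgb hwa0 hwb0 hA hB
    have ht0 : (0 : ℝ) < t := lt_trans one_pos ht
    have hg0 : 0 < g t := hgpos t ht
    have hψt : 0 < ψ t := hψpos t ht0
    have hφψ : φ (ψ t) = t := hinv₂ t ht0
    have hxa : 0 < a * g t := mul_pos ha hg0
    have hxb : 0 < b * g t := mul_pos hb hg0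
    have hTa : T < a * g t := by
      rw [div_lt_iff₀ ha] at hga; linarith [hga]
    have hTb : T < b * g t := by
      rw [div_lt_iff₀ hb] at hgb; linarith [hgb]
    have hba := hbound (a * g t) hTa
    have hbb := hbound (b * g t) hTb
    constructor
    · -- a * g t ≤ ψ t
      have hφa : φ (a * g t) < t := by
        have h1 : φ (a * g t) ≤ c₂ * ((a * g t) ^ q * Real.log (a * g t) ^ ν) := hba.2
        rw [key a t ha ht hwa0.le] at h1
        have h2 : c₂ * (a ^ q * (Real.log (a * g t) / Real.log t) ^ ν * t)
            = (c₂ * a ^ q * (Real.log (a * g t) / Real.log t) ^ ν) * t := by ring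
        rw [h2] at h1
        calc φ (a * g t) ≤ (c₂ * a ^ q * (Real.log (a * g t) / Real.log t) ^ ν) * t := h1
          _ < 1 * t := by
              exact mul_lt_mul_of_pos_right hA ht0
          _ = t := one_mul t
      have := (hφmono.lt_iff_lt (Set.mem_Ioi.2 hxa) (Set.mem_Ioi.2 hψt)).1
        (by rw [hφψ]; exact hφa)
      exact this.le
    constructor
    · -- ψ t ≤ b * g t
      have hφb : t < φ (b * g t) := by
        have h1 : c₁ * ((b * g t) ^ q * Real.log (b * g t) ^ ν) ≤ φ (b * g t) := hbb.1
        rw [key b t hb ht hwb0.le] at h1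
        have h2 : c₁ * (b ^ q * (Real.log (b * g t) / Real.log t) ^ ν * t)
            = (c₁ * b ^ q * (Real.log (b * g t) / Real.log t) ^ ν) * t := by ring
        rw [h2] at h1
        calc t = 1 * t := (one_mul t).symm
          _ < (c₁ * b ^ q * (Real.log (b * g t) / Real.log t) ^ ν) * t :=
              mul_lt_mul_of_pos_right hB ht0
          _ ≤ φ (b * g t) := h1
      have := (hφmono.lt_iff_lt (Set.mem_Ioi.2 hψt) (Set.mem_Ioi.2 hxb)).1
        (by rw [hφψ]; exact hφb)
      exact this.le
    · exact hg0.le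
  obtain ⟨T₀, hT₀⟩ := eventually_atTop.1 main
  refine ⟨min a b, max a b, max T₀ 1, lt_min ha hb, min_le_max, lt_of_lt_of_le one_pos (le_max_right _ _), ?_⟩
  intro t ht
  have h1 : T₀ ≤ t := le_trans (le_max_left _ _) ht.le
  obtain ⟨hl, hu, hg0⟩ := hT₀ t h1
  constructor
  · calc min a b * (t ^ r * Real.log t ^ s) ≤ a * g t :=
        mul_le_mul_of_nonneg_right (min_le_left a b) hg0
      _ ≤ ψ t := hl
  · calc ψ t ≤ b * g t := hu
      _ ≤ max a b * (t ^ r * Real.log t ^ s) :=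
        mul_le_mul_of_nonneg_right (le_max_right a b) hg0
end
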